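/- Let G be a finitely generated group of subexponential growth with finite symmetric generating set S. Then G has the patching property: for every r ∈ ℕ there exists R ∈ ℕ such that the smallest family of subsets of G containing all left translates of the ball B_R, closed under subsets and under the almost-union operation A ∪ᵣ B = A°ʳ ∪ B°ʳ ∪ ((A ∪ B) \ (A·B_r ∩ B·B_r)), contains every ball B_n for n ∈ ℕ. Here A°ʳ = {a ∈ G : a·B_r ⊆ A}. -/

import Mathlib

open Pointwise

variable {G : Type*} [Group G]

/-- The word metric on `G` with respect to the generating set `S`:
`wordDist S a b` is the length of a shortest word in `S` expressing `a⁻¹ * b`. -/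
noncomputable def wordDist (S : Set G) (a b : G) : ℕ :=
  sInf {n | ∃ l : List G, (∀ s ∈ l, s ∈ S) ∧ l.length = n ∧ l.prod = a⁻¹ * b}

/-- The ball of radius `r` for the word metric (around the identity). -/
def wball (S : Set G) (r : ℕ) : Set G := {g | wordDist S 1 g ≤ r}

/-- `A°ʳ = {a : a · B_r ⊆ A}`. -/
def shrinkSet (S : Set G) (r : ℕ) (A : Set G) : Set G :=
  {a | ∀ b ∈ wball S r, a * b ∈ A}

/-- The almost-union operation `A ∪ᵣ B = A°ʳ ∪ B°ʳ ∪ ((A ∪ B) \ (A·B_r ∩ B·B_r))`. -/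
def almostUnion (S : Set G) (r : ℕ) (A B : Set G) : Set G :=
  shrinkSet S r A ∪ shrinkSet S r B ∪ ((A ∪ B) \ (A * wball S r ∩ B * wball S r))

/-- The smallest family of subsets of `G` containing all left translates of the ball `B_R`,
closed under subsets and under the almost-union operation with parameter `r`. -/
inductive Patch (S : Set G) (r R : ℕ) : Set G → Prop
  | transBall (a : G) : Patch S r R ((fun g => a * g) '' wball S R)
  | subset {A B : Set G} : Patch S r R B → A ⊆ B → Patch S r R A
  | aunion {A B : Set G} : Patch S r R A → Patch S r R B → Patch S r R (almostUnion S r A B)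

section Lemmas

variable (S : Set G)

lemma wordDist_one (g : G) :
    wordDist S 1 g = sInf {n | ∃ l : List G, (∀ s ∈ l, s ∈ S) ∧ l.length = n ∧ l.prod = g} := by
  simp [wordDist]

lemma exists_word {S : Set G} (hsym : ∀ s ∈ S, s⁻¹ ∈ S)
    (hgen : Subgroup.closure S = ⊤) (g : G) :
    ∃ l : List G, (∀ s ∈ l, s ∈ S) ∧ l.prod = g := by
  have hg : g ∈ Subgroup.closure S := by rw [hgen]; trivial
  induction hg using Subgroup.closure_induction with
  | mem x hx => exact ⟨[x], by simpa using hx, by simp⟩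
  | one => exact ⟨[], by simp, by simp⟩
  | mul x y _ _ hx hy =>
      obtain ⟨l1, h1, p1⟩ := hx
      obtain ⟨l2, h2, p2⟩ := hy
      refine ⟨l1 ++ l2, ?_, by simp [p1, p2]⟩
      intro s hs
      rcases List.mem_append.1 hs with h | h
      exacts [h1 s h, h2 s h]
  | inv x _ hx =>
      obtain ⟨l, h1, p1⟩ := hx
      refine ⟨(l.map Inv.inv).reverse, ?_, ?_⟩
      · intro s hs
        simp only [List.mem_reverse, List.mem_map] at hs
        obtain ⟨t, ht, rfl⟩ := hs
        exact hsym t (h1 t ht)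
      · rw [← List.prod_inv_reverse, p1]

lemma wordDist_le {S : Set G} {g : G} {l : List G} (hl : ∀ s ∈ l, s ∈ S) (hp : l.prod = g) :
    wordDist S 1 g ≤ l.length := by
  rw [wordDist_one]
  exact Nat.sInf_le ⟨l, hl, rfl, hp⟩

lemma wordDist_spec {S : Set G} (hsym : ∀ s ∈ S, s⁻¹ ∈ S)
    (hgen : Subgroup.closure S = ⊤) (g : G) :
    ∃ l : List G, (∀ s ∈ l, s ∈ S) ∧ l.length = wordDist S 1 g ∧ l.prod = g := by
  obtain ⟨l, hl, hp⟩ := exists_word hsym hgen g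
  have hne : {n | ∃ l : List G, (∀ s ∈ l, s ∈ S) ∧ l.length = n ∧ l.prod = g}.Nonempty :=
    ⟨l.length, l, hl, rfl, hp⟩
  have := Nat.sInf_mem hne
  rw [← wordDist_one] at this
  exact this

lemma one_mem_wball (n : ℕ) : (1 : G) ∈ wball S n := by
  have : wordDist S 1 (1 : G) ≤ 0 := wordDist_le (l := []) (by simp) (by simp)
  exact le_trans this (Nat.zero_le n)

lemma wball_mono {m n : ℕ} (h : m ≤ n) : wball S m ⊆ wball S n :=
  fun _ hg => le_trans hg h

lemma mul_mem_wball {S : Set G} (hsym : ∀ s ∈ S, s⁻¹ ∈ S)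
    (hgen : Subgroup.closure S = ⊤) {b c : G} {p q : ℕ}
    (hb : b ∈ wball S p) (hc : c ∈ wball S q) : b * c ∈ wball S (p + q) := by
  obtain ⟨l1, h1, len1, p1⟩ := wordDist_spec hsym hgen b
  obtain ⟨l2, h2, len2, p2⟩ := wordDist_spec hsym hgen c
  have : wordDist S 1 (b * c) ≤ (l1 ++ l2).length := by
    refine wordDist_le ?_ (by simp [p1, p2])
    intro s hs; rcases List.mem_append.1 hs with h | h; exacts [h1 s h, h2 s h]
  simp only [List.length_append, len1, len2] at this
  exact le_trans this (add_le_add hb hc)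

end Lemmas

section Lemmas2

lemma wball_zero {S : Set G} (hsym : ∀ s ∈ S, s⁻¹ ∈ S)
    (hgen : Subgroup.closure S = ⊤) : wball S 0 ⊆ {(1 : G)} := by
  intro g hg
  have hg' : wordDist S 1 g ≤ 0 := hg
  obtain ⟨l, hl, len, hp⟩ := wordDist_spec hsym hgen g
  have : l.length = 0 := by omega
  rw [List.length_eq_zero_iff] at this
  simp [this] at hp
  simp [← hp]

lemma wball_finite {S : Set G} (hS : S.Finite) (hsym : ∀ s ∈ S, s⁻¹ ∈ S)
    (hgen : Subgroup.closure S = ⊤) (n : ℕ) : (wball S n).Finite := by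
  induction n with
  | zero => exact Set.Finite.subset (Set.finite_singleton 1) (wball_zero hsym hgen)
  | succ n ih =>
      have hsub : wball S (n + 1) ⊆ (insert (1 : G) S) * wball S n := by
        intro g hg
        have hg' : wordDist S 1 g ≤ n + 1 := hg
        obtain ⟨l, hl, len, hp⟩ := wordDist_spec hsym hgen g
        match l, hp, len, hl with
        | [], hp, len, hl =>
            exact ⟨1, Set.mem_insert 1 S, 1, one_mem_wball S n, by simp [← hp]⟩
        | s :: l', hp, len, hl =>
            refine ⟨s, Set.mem_insert_of_mem _ (hl s (by simp)), l'.prod, ?_, by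
              simp at hp; simp [hp]⟩
            have : wordDist S 1 l'.prod ≤ l'.length := wordDist_le
              (fun t ht => hl t (List.mem_cons_of_mem s ht)) rfl
            have hlen : l'.length ≤ n := by
              simp at len; omega
            exact le_trans this hlen
      exact Set.Finite.subset (Set.Finite.mul (hS.insert 1) ih) hsub

lemma shrink_mono (S : Set G) (r : ℕ) {A B : Set G} (h : A ⊆ B) :
    shrinkSet S r A ⊆ shrinkSet S r B :=
  fun a ha b hb => h (ha b hb)

lemma smul_wball_subset_shrink {S : Set G} (hsym : ∀ s ∈ S, s⁻¹ ∈ S)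
    (hgen : Subgroup.closure S = ⊤) {r k : ℕ} (hrk : r ≤ k) (t : G) :
    t • wball S (k - r) ⊆ shrinkSet S r (t • wball S k) := by
  rintro a ⟨b, hb, rfl⟩ c hc
  refine ⟨b * c, ?_, (mul_assoc t b c).symm⟩
  have : b * c ∈ wball S (k - r + r) := mul_mem_wball hsym hgen hb hc
  rwa [Nat.sub_add_cancel hrk] at this

lemma shrinkSet_smul (S : Set G) (r : ℕ) (g : G) (A : Set G) :
    shrinkSet S r (g • A) = g • shrinkSet S r A := by
  ext a
  simp only [shrinkSet, Set.mem_setOf_eq, Set.mem_smul_set_iff_inv_smul_mem, smul_eq_mul,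
    mul_assoc]

lemma smul_set_mul' (g : G) (A B : Set G) : (g • A) * B = g • (A * B) := by
  ext x
  simp only [Set.mem_smul_set, Set.mem_mul]
  constructor
  · rintro ⟨a, ⟨y, hy, rfl⟩, b, hb, rfl⟩
    exact ⟨y * b, ⟨y, hy, b, hb, rfl⟩, by simp [smul_eq_mul, mul_assoc]⟩
  · rintro ⟨z, ⟨y, hy, b, hb, rfl⟩, rfl⟩
    exact ⟨g * y, ⟨y, hy, rfl⟩, b, hb, by simp [smul_eq_mul, mul_assoc]⟩

lemma almostUnion_smul (S : Set G) (r : ℕ) (g : G) (A B : Set G) :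
    almostUnion S r (g • A) (g • B) = g • almostUnion S r A B := by
  unfold almostUnion
  simp only [shrinkSet_smul, Set.smul_set_union, Set.smul_set_sdiff, Set.smul_set_inter,
    ← smul_mul_assoc]

lemma patch_smul {S : Set G} {r R : ℕ} {A : Set G} (g : G) (h : Patch S r R A) :
    Patch S r R (g • A) := by
  induction h with
  | transBall a =>
      have h2 : g • ((fun x => a * x) '' wball S R) = (fun x => (g * a) * x) '' wball S R := by
        rw [← Set.image_smul, Set.image_image]
        simp [smul_eq_mul, mul_assoc]
      rw [h2]
      exact Patch.transBall (g * a)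
  | subset hB hAB ih => exact Patch.subset ih (Set.smul_set_mono hAB)
  | aunion hA hB ihA ihB =>
      rw [← almostUnion_smul]
      exact Patch.aunion ihA ihB

end Lemmas2

section Lemmas3

lemma patch_union_list {S : Set G} (hsym : ∀ s ∈ S, s⁻¹ ∈ S)
    (hgen : Subgroup.closure S = ⊤) {r R m : ℕ}
    (hm : Patch S r R (wball S m)) :
    ∀ d : ℕ, d * r ≤ m → ∀ L : List G, L.length ≤ 2 ^ d →
      Patch S r R (⋃ t ∈ L, t • wball S (m - d * r)) := by
  intro d
  induction d with
  | zero =>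
      intro _ L hL
      match L, hL with
      | [], _ => exact Patch.subset hm (by simp)
      | [t], _ =>
          have he : (⋃ x ∈ [t], x • wball S (m - 0 * r)) = t • wball S m := by simp
          exact he ▸ patch_smul t hm
      | t :: u :: L', hL => simp at hL
  | succ d ih =>
      intro hdr L hL
      have hsm : (d + 1) * r = d * r + r := Nat.succ_mul d r
      have hdr' : d * r ≤ m := by omega
      have h2 : 2 ^ (d + 1) = 2 ^ d * 2 := pow_succ 2 d
      have h1 := ih hdr' (L.take (2 ^ d)) (by
        rw [List.length_take]; exact min_le_left _ _)
      have h2' := ih hdr' (L.drop (2 ^ d)) (by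
        rw [List.length_drop]; omega)
      have key : (⋃ t ∈ L, t • wball S (m - (d + 1) * r)) ⊆
          shrinkSet S r (⋃ t ∈ L.take (2 ^ d), t • wball S (m - d * r)) ∪
          shrinkSet S r (⋃ t ∈ L.drop (2 ^ d), t • wball S (m - d * r)) := by
        intro x hx
        simp only [Set.mem_iUnion, exists_prop] at hx
        obtain ⟨t, htL, hxt⟩ := hx
        have heq : m - (d + 1) * r = (m - d * r) - r := by omega
        rw [heq] at hxt
        have hrk : r ≤ m - d * r := by omega
        have hx' := smul_wball_subset_shrink hsym hgen hrk t hxt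
        have hsplit : t ∈ L.take (2 ^ d) ∨ t ∈ L.drop (2 ^ d) := by
          rw [← List.take_append_drop (2 ^ d) L] at htL
          exact List.mem_append.1 htL
        rcases hsplit with h | h
        · exact Or.inl (shrink_mono S r
            (Set.subset_iUnion₂ (s := fun (t : G) (_ : t ∈ L.take (2 ^ d)) => t • wball S (m - d * r)) t h) hx')
        · exact Or.inr (shrink_mono S r
            (Set.subset_iUnion₂ (s := fun (t : G) (_ : t ∈ L.drop (2 ^ d)) => t • wball S (m - d * r)) t h) hx')
      exact Patch.subset (Patch.aunion h1 h2')
        (key.trans Set.subset_union_left)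

lemma patch_double {S : Set G} (hS : S.Finite) (hsym : ∀ s ∈ S, s⁻¹ ∈ S)
    (hgen : Subgroup.closure S = ⊤) {r R m : ℕ} (r' : ℕ) (hr : r ≤ r')
    (hcard : (wball S (2 * m)).ncard ≤ 2 ^ (m / r'))
    (hm : Patch S r R (wball S m)) : Patch S r R (wball S (2 * m)) := by
  have hdr : (m / r') * r ≤ m :=
    le_trans (Nat.mul_le_mul_left _ hr) (Nat.div_mul_le_self m r')
  have hfin := wball_finite hS hsym hgen (2 * m)
  set L := hfin.toFinset.toList with hLdef
  have hlen : L.length = (wball S (2 * m)).ncard := by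
    rw [hLdef, Finset.length_toList, Set.ncard_eq_toFinset_card _ hfin]
  have hP := patch_union_list hsym hgen hm (m / r') hdr L (by omega)
  refine Patch.subset hP ?_
  intro g hg
  have hgL : g ∈ L := by
    rw [hLdef, Finset.mem_toList, Set.Finite.mem_toFinset]
    exact hg
  exact Set.mem_biUnion hgL ⟨1, one_mem_wball S _, by simp⟩

end Lemmas3


/-- A finitely generated group of subexponential growth has the patching property. -/
theorem subexponential_growth_patching (S : Finset G)
    (hsym : ∀ s ∈ S, s⁻¹ ∈ S) (hgen : Subgroup.closure (S : Set G) = ⊤)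
    (hsub : ∀ α : ℝ, 1 < α → ∀ᶠ n : ℕ in Filter.atTop,
      (Set.ncard (wball (S : Set G) n) : ℝ) < α ^ n) :
    ∀ r : ℕ, ∃ R : ℕ, ∀ n : ℕ, Patch (S : Set G) r R (wball (S : Set G) n) := by
  intro r
  set r' : ℕ := max r 1 with hr'def
  have hr'pos : 0 < r' := lt_of_lt_of_le one_pos (le_max_right r 1)
  have hrr' : r ≤ r' := le_max_left r 1
  set e : ℝ := (4 * (r' : ℝ))⁻¹ with hedef
  have hepos : 0 < e := by
    rw [hedef]
    positivity
  set α : ℝ := (2 : ℝ) ^ e with hαdef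
  have hα : 1 < α := by
    rw [hαdef]
    rw [Real.one_lt_rpow_iff_of_pos (by norm_num)]
    exact Or.inl ⟨by norm_num, hepos⟩
  obtain ⟨N₀, hN₀⟩ := Filter.eventually_atTop.1 (hsub α hα)
  set R : ℕ := max (max N₀ (2 * r')) 1 with hRdef
  have hR1 : 1 ≤ R := le_max_right _ 1
  have hRN₀ : N₀ ≤ R := le_trans (le_max_left _ _) (le_max_left _ 1)
  have hR2r' : 2 * r' ≤ R := le_trans (le_max_right _ _) (le_max_left _ 1)
  -- the key cardinality estimate
  have hstep : ∀ m : ℕ, R ≤ m → (wball (S : Set G) (2 * m)).ncard ≤ 2 ^ (m / r') := by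
    intro m hm
    set q : ℕ := m / r' with hqdef
    have hq2 : 2 ≤ q := by
      rw [hqdef, Nat.le_div_iff_mul_le hr'pos]
      omega
    have hmod : r' * q + m % r' = m := Nat.div_add_mod m r'
    have hmodlt : m % r' < r' := Nat.mod_lt m hr'pos
    have hr'q : r' ≤ r' * q := Nat.le_mul_of_pos_right r' (by omega)
    have hkey : (m : ℝ) ≤ 2 * (r' : ℝ) * (q : ℝ) := by
      have h1 : ((r' * q + m % r' : ℕ) : ℝ) = (m : ℝ) := by exact_mod_cast hmod
      have h2 : ((m % r' : ℕ) : ℝ) < (r' : ℝ) := by exact_mod_cast hmodlt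
      have h3 : ((r' : ℕ) : ℝ) ≤ ((r' * q : ℕ) : ℝ) := by exact_mod_cast hr'q
      push_cast at h1 h3
      linarith
    have hcard : ((wball (S : Set G) (2 * m)).ncard : ℝ) < α ^ (2 * m) :=
      hN₀ (2 * m) (by omega)
    have hα2m : α ^ (2 * m) = (2 : ℝ) ^ (e * (2 * m : ℕ)) := by
      rw [hαdef, ← Real.rpow_natCast ((2:ℝ) ^ e) (2 * m), ← Real.rpow_mul (by norm_num)]
    have hexp : e * (2 * m : ℕ) ≤ (q : ℝ) := by
      rw [hedef]
      rw [inv_mul_le_iff₀ (by positivity)]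
      push_cast
      linarith
    have hle : α ^ (2 * m) ≤ ((2 ^ q : ℕ) : ℝ) := by
      rw [hα2m]
      calc (2 : ℝ) ^ (e * (2 * m : ℕ)) ≤ (2 : ℝ) ^ (q : ℝ) :=
            Real.rpow_le_rpow_of_exponent_le (by norm_num) hexp
        _ = ((2 ^ q : ℕ) : ℝ) := by
            rw [Real.rpow_natCast]; push_cast; ring
    have := lt_of_lt_of_le hcard hle
    exact_mod_cast le_of_lt this
  refine ⟨R, ?_⟩
  have hbase : Patch (S : Set G) r R (wball (S : Set G) R) := by
    have h := Patch.transBall (S := (S : Set G)) (r := r) (R := R) 1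
    simpa using h
  have hiter : ∀ k : ℕ, Patch (S : Set G) r R (wball (S : Set G) (2 ^ k * R)) := by
    intro k
    induction k with
    | zero => simpa using hbase
    | succ k ih =>
        have hmR : R ≤ 2 ^ k * R := Nat.le_mul_of_pos_left R (Nat.pow_pos (n := k) (by norm_num))
        have heq : 2 ^ (k + 1) * R = 2 * (2 ^ k * R) := by ring
        rw [heq]
        exact patch_double S.finite_toSet hsym hgen r' hrr' (hstep _ hmR) ih
  intro n
  have hn : n ≤ 2 ^ n * R := by
    calc n ≤ 2 ^ n := le_of_lt (Nat.lt_two_pow_self (n := n))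
      _ = 2 ^ n * 1 := (mul_one _).symm
      _ ≤ 2 ^ n * R := Nat.mul_le_mul_left _ hR1
  exact Patch.subset (hiter n) (wball_mono _ hn)
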